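/- For unit vectors ψ_x, ψ_y and projections P_i as above, |⟨ψ_x, (I - O_x O_y) ψ_y⟩| ≤ 2 ∑_{i : x_i ≠ y_i} ‖P_i ψ_x‖ · ‖P_i ψ_y‖. -/

import Mathlib

open scoped InnerProductSpace

theorem stmt_2 (N : ℕ) (Z : Type) [Fintype Z] (x y : Fin N → Bool)
    (ψx ψy : EuclideanSpace ℂ (Option (Fin N) × Z))
    (hψx : ‖ψx‖ = 1) (hψy : ‖ψy‖ = 1)
    (Ox Oy : EuclideanSpace ℂ (Option (Fin N) × Z) → EuclideanSpace ℂ (Option (Fin N) × Z))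
    (hOx : ∀ ψ p, Ox ψ p = match p.1 with
      | none => ψ p
      | some i => (if x i then -1 else 1) * ψ p)
    (hOy : ∀ ψ p, Oy ψ p = match p.1 with
      | none => ψ p
      | some i => (if y i then -1 else 1) * ψ p)
    (P : Fin N → EuclideanSpace ℂ (Option (Fin N) × Z) → EuclideanSpace ℂ (Option (Fin N) × Z))
    (hP : ∀ i ψ p, P i ψ p = if p.1 = some i then ψ p else 0) :
    ‖(⟪ψx, ψy - Ox (Oy ψy)⟫_ℂ)‖ ≤
      2 * ∑ i ∈ Finset.univ.filter (fun i => x i ≠ y i), ‖P i ψx‖ * ‖P i ψy‖ := by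
  have hS : ∀ i, ⟪P i ψx, P i ψy⟫_ℂ =
      ∑ z, (starRingEnd ℂ) (ψx (some i, z)) * ψy (some i, z) := by
    intro i
    rw [PiLp.inner_apply, Fintype.sum_prod_type, Fintype.sum_option]
    simp [hP, RCLike.inner_apply]
    exact Finset.sum_congr rfl fun _ _ => mul_comm _ _
  have key : ⟪ψx, ψy - Ox (Oy ψy)⟫_ℂ =
      2 * ∑ i ∈ Finset.univ.filter (fun i => x i ≠ y i), ⟪P i ψx, P i ψy⟫_ℂ := by
    rw [PiLp.inner_apply, Fintype.sum_prod_type, Fintype.sum_option]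
    have hnone : ∀ z : Z, ⟪ψx (none, z), (ψy - Ox (Oy ψy)) (none, z)⟫_ℂ = 0 := by
      intro z
      simp [PiLp.sub_apply, hOx, hOy, RCLike.inner_apply]
    have hsome : ∀ (i : Fin N) (z : Z),
        ⟪ψx (some i, z), (ψy - Ox (Oy ψy)) (some i, z)⟫_ℂ =
          if x i ≠ y i then 2 * ((starRingEnd ℂ) (ψx (some i, z)) * ψy (some i, z)) else 0 := by
      intro i z
      simp only [PiLp.sub_apply, hOx, hOy, RCLike.inner_apply]
      cases hx : x i <;> cases hy : y i <;> simp <;> ring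
    simp only [hnone, hsome, Finset.sum_const_zero, zero_add]
    rw [Finset.mul_sum, Finset.sum_filter]
    congr 1
    ext i
    rw [hS i]
    split <;> simp [Finset.mul_sum]
  rw [key]
  rw [norm_mul, Complex.norm_ofNat]
  gcongr 2 * ?_
  calc ‖(∑ i ∈ Finset.univ.filter (fun i => x i ≠ y i), ⟪P i ψx, P i ψy⟫_ℂ)‖
      ≤ ∑ i ∈ Finset.univ.filter (fun i => x i ≠ y i), ‖(⟪P i ψx, P i ψy⟫_ℂ)‖ := by
        exact norm_sum_le _ _
    _ ≤ ∑ i ∈ Finset.univ.filter (fun i => x i ≠ y i), ‖P i ψx‖ * ‖P i ψy‖ := by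
        apply Finset.sum_le_sum
        intro i _
        exact norm_inner_le_norm (𝕜 := ℂ) _ _
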